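/- There is a constant c₁ > 0 (independent of n) such that for all sufficiently large n, the Cayley graph of the symmetric group S_n with generating set {(12), (12…n), (12…n)⁻¹} has Cheeger constant h ≤ c₁·n⁻². (A witnessing set is A = {φ ∈ S_n : dist(φ(1),φ(2)) ≤ n/4}, where dist is the cyclic distance on {1,…,n}.) -/

import Mathlib

noncomputable section
open Matrix

/-- The graph Laplacian: `Δ f (x) = Σ_{y ~ x} (f y - f x)`. -/
def lap {V : Type*} (G : SimpleGraph V) (f : V → ℝ) (x : V) : ℝ :=
  ∑ᶠ y ∈ {y | G.Adj x y}, (f y - f x)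

/-- The carré du champ `Γ(f,g)(x) = (1/2) Σ_{y ~ x} (f x - f y)(g x - g y)`. -/
def gam {V : Type*} (G : SimpleGraph V) (f g : V → ℝ) (x : V) : ℝ :=
  (1/2) * ∑ᶠ y ∈ {y | G.Adj x y}, (f x - f y) * (g x - g y)

/-- The iterated carré du champ `Γ₂(f) = (1/2) Δ Γ(f) - Γ(f, Δ f)`. -/
def gam2 {V : Type*} (G : SimpleGraph V) (f : V → ℝ) (x : V) : ℝ :=
  (1/2) * lap G (gam G f f) x - gam G f (lap G f) x

/-- `Ric(G) ≥ K` : the Bochner inequality `Γ₂(f)(x) ≥ K Γ(f)(x)` holds for all `f, x`. -/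
def RicGE {V : Type*} (G : SimpleGraph V) (K : ℝ) : Prop :=
  ∀ (f : V → ℝ) (x : V), K * gam G f f x ≤ gam2 G f x

open Classical in
/-- Degree of a vertex. -/
def degC {V : Type*} [Fintype V] (G : SimpleGraph V) (x : V) : ℕ :=
  (Finset.univ.filter fun y => G.Adj x y).card

open Classical in
/-- The Laplacian matrix `Δ = A - D` (negative semidefinite). -/
def lapMat {V : Type*} [Fintype V] (G : SimpleGraph V) : Matrix V V ℝ :=
  Matrix.of fun x y => (if G.Adj x y then (1:ℝ) else 0) - (if x = y then (degC G x : ℝ) else 0)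

/-- The spectral gap: least nonzero eigenvalue of `-Δ`. -/
def spectralGap {V : Type*} [Fintype V] (G : SimpleGraph V) : ℝ :=
  sInf {μ : ℝ | μ ≠ 0 ∧ ∃ f : V → ℝ, f ≠ 0 ∧ (-(lapMat G)) *ᵥ f = μ • f}

open Classical in
/-- Number of edges from `A` to its complement. -/
def boundary {V : Type*} [Fintype V] (G : SimpleGraph V) (A : Finset V) : ℕ :=
  ∑ x ∈ A, (Finset.univ.filter fun y => G.Adj x y ∧ y ∉ A).card

/-- The Cheeger (edge-isoperimetric) constant. -/
def cheeger {V : Type*} [Fintype V] (G : SimpleGraph V) : ℝ :=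
  sInf {r : ℝ | ∃ A : Finset V, 0 < A.card ∧ 2 * A.card ≤ Fintype.card V ∧
    r = (boundary G A : ℝ) / (A.card : ℝ)}

/-- The heat semigroup `P_t f = exp(tΔ) f`. -/
def heat {V : Type*} [Fintype V] [DecidableEq V] (G : SimpleGraph V) (t : ℝ) (f : V → ℝ) :
    V → ℝ :=
  (NormedSpace.exp (t • lapMat G)) *ᵥ f

/-- The generating set `{(1 2), (1 2 ⋯ n), (1 2 ⋯ n)⁻¹}` in the symmetric group `S_{n+2}`,
realized as permutations of `Fin (n+2)`; `finRotate` is the long cycle. -/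
def snGen (n : ℕ) : Set (Equiv.Perm (Fin (n + 2))) :=
  {Equiv.swap 0 1, finRotate (n + 2), (finRotate (n + 2))⁻¹}

/-- The Cayley graph of `S_{n+2}` with generating set `snGen n`. -/
def snGraph (n : ℕ) : SimpleGraph (Equiv.Perm (Fin (n + 2))) where
  Adj x y := x ≠ y ∧ x⁻¹ * y ∈ snGen n
  symm := ⟨by
    rintro x y ⟨hne, hs⟩
    refine ⟨hne.symm, ?_⟩
    have h : (x⁻¹ * y)⁻¹ ∈ snGen n := by
      rcases hs with h | h | h <;> rw [h] <;> simp [snGen, Equiv.swap_inv]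
    simpa [_root_.mul_inv_rev] using h⟩
  loopless := ⟨by rintro x ⟨hne, -⟩; exact hne rfl⟩


namespace CheegerSnAux
open Finset Equiv
open Fin.NatCast

lemma fin_add_one_val {N : ℕ} (d : Fin (N+2)) (h : d.val + 1 < N + 2) :
    (d + 1).val = d.val + 1 := by
  rw [Fin.add_def]
  simp only [Fin.val_one]
  exact Nat.mod_eq_of_lt h

lemma fin_sub_one_val {N : ℕ} (d : Fin (N+2)) (h : 1 ≤ d.val) :
    (d - 1).val = d.val - 1 := by
  rw [Fin.sub_def]
  simp only [Fin.val_one]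
  have h2 : d.val < N + 2 := d.isLt
  have h3 : N + 1 + d.val = (d.val - 1) + 1 * (N+2) := by omega
  rw [show N + 2 - 1 = N + 1 by omega, h3, Nat.add_mul_mod_self_right,
    Nat.mod_eq_of_lt (by omega)]

lemma fin_zero_sub_one_val {N : ℕ} : ((0 - 1 : Fin (N+2))).val = N + 1 := by
  rw [Fin.sub_def]
  simp only [Fin.val_one, Fin.val_zero]
  rw [Nat.add_zero, Nat.mod_eq_of_lt (by omega)]
  omega

lemma exists_perm_two {α : Type*} [DecidableEq α] {p q p' q' : α}
    (hpq : p ≠ q) (hpq' : p' ≠ q') : ∃ τ : Equiv.Perm α, τ p' = p ∧ τ q' = q := by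
  set q'' := Equiv.swap p p' q' with hq''
  have hpq'' : p ≠ q'' := by
    intro h
    apply hpq'
    have h2 : Equiv.swap p p' p = Equiv.swap p p' q'' := by rw [h]
    rw [Equiv.swap_apply_left, hq'', Equiv.swap_apply_self] at h2
    exact h2
  refine ⟨Equiv.swap q'' q * Equiv.swap p p', ?_, ?_⟩
  · show Equiv.swap q'' q (Equiv.swap p p' p') = p
    rw [Equiv.swap_apply_right, Equiv.swap_apply_of_ne_of_ne hpq'' hpq]
  · show Equiv.swap q'' q (Equiv.swap p p' q') = q
    rw [← hq'', Equiv.swap_apply_left]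

variable (n : ℕ)

/-- threshold -/
def T : ℕ := (n+1)/2

/-- the pair condition -/
def cond (pq : Fin (n+2) × Fin (n+2)) : Prop :=
  1 ≤ (pq.2 - pq.1).val ∧ (pq.2 - pq.1).val ≤ T n

instance : DecidablePred (cond n) := fun _ => by unfold cond; infer_instance

/-- positions of 0 and 1 -/
def Fm (x : Equiv.Perm (Fin (n+2))) : Fin (n+2) × Fin (n+2) := (x⁻¹ 0, x⁻¹ 1)

def sw (pq : Fin (n+2) × Fin (n+2)) : Fin (n+2) × Fin (n+2) :=
  (Equiv.swap 0 1 pq.1, Equiv.swap 0 1 pq.2)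

def Pset : Finset (Fin (n+2) × Fin (n+2)) := univ.filter (cond n)
def Aset : Finset (Equiv.Perm (Fin (n+2))) := univ.filter (fun x => cond n (Fm n x))
def Qset : Finset (Fin (n+2) × Fin (n+2)) := (Pset n).filter (fun pq => ¬ cond n (sw n pq))
def Bset : Finset (Equiv.Perm (Fin (n+2))) :=
  (Aset n).filter (fun x => ¬ cond n (sw n (Fm n x)))
def fib (pq : Fin (n+2) × Fin (n+2)) : Finset (Equiv.Perm (Fin (n+2))) :=
  univ.filter (fun x => Fm n x = pq)
def s0 : ℕ := (fib n (0, 1)).card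

variable {n}

lemma cond_ne {pq : Fin (n+2) × Fin (n+2)} (h : cond n pq) : pq.1 ≠ pq.2 := by
  intro he
  have h0 : pq.2 - pq.1 = 0 := by rw [he, sub_self]
  unfold cond at h
  rw [h0] at h
  simp at h

lemma cond_sub_eq {pq pq' : Fin (n+2) × Fin (n+2)} (h : pq.2 - pq.1 = pq'.2 - pq'.1) :
    cond n pq ↔ cond n pq' := by unfold cond; rw [h]

lemma fib_card_eq (pq pq' : Fin (n+2) × Fin (n+2)) (h : pq.1 ≠ pq.2) (h' : pq'.1 ≠ pq'.2) :
    (fib n pq).card = (fib n pq').card := by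
  obtain ⟨τ, hτ1, hτ2⟩ := exists_perm_two h h'
  apply Finset.card_nbij' (fun x => x * τ) (fun y => y * τ⁻¹)
  · intro x hx
    simp only [Finset.mem_coe, fib, mem_filter, mem_univ, true_and, Fm, Prod.ext_iff] at *
    obtain ⟨h1, h2⟩ := hx
    rw [_root_.mul_inv_rev, Equiv.Perm.mul_apply, Equiv.Perm.mul_apply, h1, h2]
    constructor
    · rw [Equiv.Perm.inv_eq_iff_eq, hτ1]
    · rw [Equiv.Perm.inv_eq_iff_eq, hτ2]
  · intro y hy
    simp only [Finset.mem_coe, fib, mem_filter, mem_univ, true_and, Fm, Prod.ext_iff] at *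
    obtain ⟨h1, h2⟩ := hy
    rw [_root_.mul_inv_rev, Equiv.Perm.mul_apply, Equiv.Perm.mul_apply, h1, h2, inv_inv]
    exact ⟨hτ1, hτ2⟩
  · intro x _; show x * τ * τ⁻¹ = x; rw [mul_assoc, mul_inv_cancel, mul_one]
  · intro y _; show y * τ⁻¹ * τ = y; rw [mul_assoc, inv_mul_cancel, mul_one]

lemma zero_ne_one_fin : (0 : Fin (n+2)) ≠ 1 := zero_ne_one

lemma card_Aset : (Aset n).card = (Pset n).card * s0 n := by
  rw [Finset.card_eq_sum_card_fiberwise (f := Fm n) (t := Pset n)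
    (fun x hx => by
      simp only [Finset.mem_coe, Aset, mem_filter, mem_univ, true_and] at hx
      simp only [Finset.mem_coe, Pset, mem_filter, mem_univ, true_and]; exact hx)]
  apply Finset.sum_const_nat
  intro pq hpq
  simp only [Pset, mem_filter, mem_univ, true_and] at hpq
  have he : (Aset n).filter (fun x => Fm n x = pq) = fib n pq := by
    ext x
    simp only [Aset, fib, mem_filter, mem_univ, true_and]
    constructor
    · rintro ⟨-, h2⟩; exact h2
    · intro h2; exact ⟨h2 ▸ hpq, h2⟩
  rw [he]
  exact fib_card_eq pq (0,1) (cond_ne hpq) zero_ne_one_fin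

lemma card_Bset : (Bset n).card = (Qset n).card * s0 n := by
  rw [Finset.card_eq_sum_card_fiberwise (f := Fm n) (t := Qset n)
    (fun x hx => by
      simp only [Finset.mem_coe, Bset, Aset, mem_filter, mem_univ, true_and] at hx
      simp only [Finset.mem_coe, Qset, Pset, mem_filter, mem_univ, true_and]; exact hx)]
  apply Finset.sum_const_nat
  intro pq hpq
  simp only [Qset, Pset, mem_filter, mem_univ, true_and] at hpq
  have he : (Bset n).filter (fun x => Fm n x = pq) = fib n pq := by
    ext x
    simp only [Bset, Aset, fib, mem_filter, mem_univ, true_and]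
    constructor
    · rintro ⟨-, h2⟩; exact h2
    · intro h2; exact ⟨⟨h2 ▸ hpq.1, h2 ▸ hpq.2⟩, h2⟩
  rw [he]
  exact fib_card_eq pq (0,1) (cond_ne hpq.1) zero_ne_one_fin

lemma card_perm_eq :
    Fintype.card (Equiv.Perm (Fin (n+2))) = ((n+2)*(n+2) - (n+2)) * s0 n := by
  classical
  have hmem : ∀ x : Equiv.Perm (Fin (n+2)), x ∈ (univ : Finset (Equiv.Perm (Fin (n+2)))) →
      Fm n x ∈ univ.filter (fun pq : Fin (n+2) × Fin (n+2) => ¬ pq.1 = pq.2) := by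
    intro x _
    simp only [mem_filter, mem_univ, true_and, Fm]
    intro h
    exact zero_ne_one_fin (x⁻¹.injective h)
  have h1 : Fintype.card (Equiv.Perm (Fin (n+2))) =
      ∑ pq ∈ univ.filter (fun pq : Fin (n+2) × Fin (n+2) => ¬ pq.1 = pq.2),
        (univ.filter (fun x => Fm n x = pq)).card := by
    rw [← Finset.card_univ]
    exact Finset.card_eq_sum_card_fiberwise hmem
  rw [h1]
  have h2 : (univ.filter (fun pq : Fin (n+2) × Fin (n+2) => ¬ pq.1 = pq.2)).card
      = (n+2)*(n+2) - (n+2) := by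
    have h3 := Finset.card_filter_add_card_filter_not
      (s := (univ : Finset (Fin (n+2) × Fin (n+2)))) (fun pq => pq.1 = pq.2)
    have h4 : (univ.filter (fun pq : Fin (n+2) × Fin (n+2) => pq.1 = pq.2)).card = n+2 := by
      rw [Finset.card_nbij' (fun pq => pq.1) (fun a => (a, a))
        (fun a _ => mem_univ _) (fun a _ => by simp) ?_ (fun a _ => rfl)]
      · simp
      · intro pq hpq
        simp only [Finset.mem_coe, mem_filter, mem_univ, true_and] at hpq
        exact Prod.ext_iff.mpr ⟨rfl, hpq⟩
    have h5 : (univ : Finset (Fin (n+2) × Fin (n+2))).card = (n+2)*(n+2) := by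
      simp [Finset.card_univ]
    omega
  rw [← h2]
  apply Finset.sum_const_nat
  intro pq hpq
  simp only [mem_filter, mem_univ, true_and] at hpq
  exact fib_card_eq pq (0,1) hpq zero_ne_one_fin


lemma card_Pset : (Pset n).card = (n+2) * T n := by
  have h1 : (Pset n).card = ((univ : Finset (Fin (n+2))) ×ˢ
      (univ.filter (fun d : Fin (n+2) => 1 ≤ d.val ∧ d.val ≤ T n))).card := by
    apply Finset.card_nbij' (fun pq => (pq.1, pq.2 - pq.1)) (fun pd => (pd.1, pd.1 + pd.2))
    · intro pq hpq
      simp only [Finset.mem_coe, Pset, cond, mem_filter, mem_univ, true_and] at hpq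
      simp only [Finset.mem_coe, Finset.mem_product, mem_filter, mem_univ, true_and]
      exact hpq
    · intro pd hpd
      simp only [Finset.mem_coe, Finset.mem_product, mem_filter, mem_univ, true_and] at hpd
      simp only [Finset.mem_coe, Pset, cond, mem_filter, mem_univ, true_and]
      rw [add_sub_cancel_left]
      exact hpd
    · intro pq _
      simp only []
      rw [add_sub_cancel]
    · intro pd _
      simp only []
      rw [add_sub_cancel_left]
  rw [h1, Finset.card_product]
  congr 1
  · simp
  · have hTle : T n < n + 2 := by unfold T; omega
    have hD : (univ.filter (fun d : Fin (n+2) => 1 ≤ d.val ∧ d.val ≤ T n)).card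
        = (Finset.Icc 1 (T n)).card := by
      apply Finset.card_nbij' (fun d : Fin (n+2) => d.val) (fun a : ℕ => (a : Fin (n+2)))
      · intro d hd
        simp only [Finset.mem_coe, mem_filter, mem_univ, true_and] at hd
        rw [Finset.mem_coe, Finset.mem_Icc]; exact hd
      · intro a ha
        rw [Finset.mem_coe, Finset.mem_Icc] at ha
        simp only [Finset.mem_coe, mem_filter, mem_univ, true_and]
        rw [Fin.val_cast_of_lt (by omega)]
        exact ha
      · intro d _; exact Fin.cast_val_eq_self d
      · intro a ha
        rw [Finset.mem_coe, Finset.mem_Icc] at ha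
        exact Fin.val_cast_of_lt (by omega)
    rw [hD, Nat.card_Icc]
    omega

lemma rot_apply (a : Fin (n+2)) : finRotate (n+2) a = a + 1 := finRotate_succ_apply a

lemma rot_inv_apply (a : Fin (n+2)) : (finRotate (n+2))⁻¹ a = a - 1 := by
  rw [Equiv.Perm.inv_eq_iff_eq, rot_apply, sub_add_cancel]

lemma Fm_mul (x s : Equiv.Perm (Fin (n+2))) :
    Fm n (x * s) = (s⁻¹ (x⁻¹ 0), s⁻¹ (x⁻¹ 1)) := by
  simp [Fm, _root_.mul_inv_rev, Equiv.Perm.mul_apply]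

lemma mem_Aset_iff (x : Equiv.Perm (Fin (n+2))) : x ∈ Aset n ↔ cond n (Fm n x) := by
  simp [Aset]

lemma mem_Aset_mul_rot (x : Equiv.Perm (Fin (n+2))) :
    x * finRotate (n+2) ∈ Aset n ↔ x ∈ Aset n := by
  rw [mem_Aset_iff, mem_Aset_iff]
  apply cond_sub_eq
  rw [Fm_mul]
  simp only [rot_inv_apply, Fm]
  exact sub_sub_sub_cancel_right _ _ 1

lemma mem_Aset_mul_rot_inv (x : Equiv.Perm (Fin (n+2))) :
    x * (finRotate (n+2))⁻¹ ∈ Aset n ↔ x ∈ Aset n := by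
  rw [mem_Aset_iff, mem_Aset_iff]
  apply cond_sub_eq
  rw [Fm_mul]
  simp only [inv_inv, rot_apply, Fm]
  exact add_sub_add_right_eq_sub _ _ 1

lemma card_small {α : Type*} [DecidableEq α] (a b c : α) :
    ({a, b, c} : Finset α).card ≤ 3 := by
  apply le_trans (Finset.card_insert_le _ _)
  have h2 : ({b, c} : Finset α).card ≤ 2 := by
    apply le_trans (Finset.card_insert_le _ _)
    simp
  omega


lemma cond_mk (a b : Fin (n+2)) :
    cond n (a, b) ↔ (1 ≤ (b - a).val ∧ (b - a).val ≤ T n) := Iff.rfl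

lemma Qset_subset (_hn : 8 ≤ n) :
    Qset n ⊆ {((0 : Fin (n+2)), (1 : Fin (n+2))),
               ((1 : Fin (n+2)), 1 + ((T n : ℕ) : Fin (n+2))),
               (0 - ((T n : ℕ) : Fin (n+2)), (0 : Fin (n+2)))} := by
  intro pq hpq
  simp only [Qset, Pset, mem_filter, mem_univ, true_and] at hpq
  obtain ⟨hc, hnc⟩ := hpq
  obtain ⟨hd1, hdT⟩ := hc
  set d := pq.2 - pq.1 with hd
  have hTbig : T n ≤ n := by unfold T; omega
  have hT1 : 1 ≤ T n := by unfold T; omega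
  have hTlt : T n < n + 2 := by omega
  have hdlt : d.val < n + 2 := d.isLt
  have hne : pq.1 ≠ pq.2 := cond_ne ⟨hd1, hdT⟩
  have hq_eq : pq.1 + d = pq.2 := add_sub_cancel _ _
  have hp_eq : pq.2 - d = pq.1 := sub_sub_cancel _ _
  simp only [Finset.mem_insert, Finset.mem_singleton]
  by_cases hp0 : pq.1 = 0
  · by_cases hq1 : pq.2 = 1
    · exact Or.inl (Prod.ext_iff.mpr ⟨hp0, hq1⟩)
    · exfalso
      have hq0 : pq.2 ≠ 0 := by rw [← hp0]; exact hne.symm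
      have hsw : sw n pq = (1, pq.2) := by
        unfold sw
        rw [hp0, Equiv.swap_apply_left, Equiv.swap_apply_of_ne_of_ne hq0 hq1]
      have hdd : pq.2 - 1 = d - 1 := by rw [hd, hp0, sub_zero]
      have hdv : d.val = 1 := by
        by_contra hcon
        apply hnc
        rw [hsw, cond_mk, hdd, fin_sub_one_val d hd1]
        omega
      have hdone : d = 1 := by
        apply Fin.ext
        rw [Fin.val_one]
        exact hdv
      apply hq1
      rw [← hq_eq, hp0, hdone, zero_add]
  · by_cases hp1 : pq.1 = 1
    · by_cases hq0 : pq.2 = 0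
      · exfalso
        have : d.val = n + 1 := by rw [hd, hq0, hp1]; exact fin_zero_sub_one_val
        omega
      · have hq1 : pq.2 ≠ 1 := by rw [← hp1]; exact hne.symm
        have hsw : sw n pq = (0, pq.2) := by
          unfold sw
          rw [hp1, Equiv.swap_apply_right, Equiv.swap_apply_of_ne_of_ne hq0 hq1]
        have hdd : pq.2 - 0 = d + 1 := by
          rw [sub_zero, ← hq_eq, hp1]
          abel
        have haddv : (d + 1).val = d.val + 1 := fin_add_one_val d (by omega)
        have hdv : d.val = T n := by
          by_contra hcon
          apply hnc
          rw [hsw, cond_mk, hdd, haddv]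
          omega
        have hdcast : d = ((T n : ℕ) : Fin (n+2)) := by
          apply Fin.ext
          rw [Fin.val_cast_of_lt hTlt]
          exact hdv
        refine Or.inr (Or.inl (Prod.ext_iff.mpr ⟨hp1, ?_⟩))
        rw [← hq_eq, hp1, hdcast]
    · by_cases hq0 : pq.2 = 0
      · have hsw : sw n pq = (pq.1, 1) := by
          unfold sw
          rw [Equiv.swap_apply_of_ne_of_ne hp0 hp1, hq0, Equiv.swap_apply_left]
        have hdd : (1 : Fin (n+2)) - pq.1 = d + 1 := by
          rw [hd, hq0]
          abel
        have haddv : (d + 1).val = d.val + 1 := fin_add_one_val d (by omega)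
        have hdv : d.val = T n := by
          by_contra hcon
          apply hnc
          rw [hsw, cond_mk, hdd, haddv]
          omega
        have hdcast : d = ((T n : ℕ) : Fin (n+2)) := by
          apply Fin.ext
          rw [Fin.val_cast_of_lt hTlt]
          exact hdv
        refine Or.inr (Or.inr (Prod.ext_iff.mpr ⟨?_, hq0⟩))
        rw [← hp_eq, hq0, hdcast]
      · by_cases hq1 : pq.2 = 1
        · exfalso
          have hsw : sw n pq = (pq.1, 0) := by
            unfold sw
            rw [Equiv.swap_apply_of_ne_of_ne hp0 hp1, hq1, Equiv.swap_apply_right]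
          have hdd : (0 : Fin (n+2)) - pq.1 = d - 1 := by
            rw [hd, hq1]
            abel
          have hdv : d.val = 1 := by
            by_contra hcon
            apply hnc
            rw [hsw, cond_mk, hdd, fin_sub_one_val d hd1]
            omega
          have hdone : d = 1 := by
            apply Fin.ext
            rw [Fin.val_one]
            exact hdv
          apply hp0
          rw [← hp_eq, hq1, hdone, sub_self]
        · exfalso
          apply hnc
          have hsw : sw n pq = pq := by
            unfold sw
            rw [Equiv.swap_apply_of_ne_of_ne hp0 hp1, Equiv.swap_apply_of_ne_of_ne hq0 hq1]
          rw [hsw]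
          exact ⟨hd1, hdT⟩

lemma card_Qset (hn : 8 ≤ n) : (Qset n).card ≤ 3 :=
  le_trans (Finset.card_le_card (Qset_subset hn)) (card_small _ _ _)

lemma Fm_mul_swap {n : ℕ} (x : Equiv.Perm (Fin (n+2))) :
    Fm n (x * Equiv.swap 0 1) = sw n (Fm n x) := by
  rw [Fm_mul]
  simp [sw, Fm, Equiv.swap_inv]

lemma mem_Aset_mul_swap_iff {n : ℕ} (x : Equiv.Perm (Fin (n+2))) :
    x * Equiv.swap 0 1 ∈ Aset n ↔ cond n (sw n (Fm n x)) := by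
  rw [mem_Aset_iff, Fm_mul_swap]

lemma eq_mul_swap_of_adj {n : ℕ} {x y : Equiv.Perm (Fin (n+2))}
    (hadj : (snGraph n).Adj x y) (hxA : x ∈ Aset n) (hyA : y ∉ Aset n) :
    y = x * Equiv.swap 0 1 := by
  obtain ⟨hne, hgen⟩ := hadj
  have hy : ∀ s : Equiv.Perm (Fin (n+2)), x⁻¹ * y = s → y = x * s := by
    intro s hs
    rw [← hs, mul_inv_cancel_left]
  simp only [snGen, Set.mem_insert_iff, Set.mem_singleton_iff] at hgen
  rcases hgen with h | h | h
  · exact hy _ h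
  · exfalso
    apply hyA
    rw [hy _ h]
    exact (mem_Aset_mul_rot x).mpr hxA
  · exfalso
    apply hyA
    rw [hy _ h]
    exact (mem_Aset_mul_rot_inv x).mpr hxA

lemma boundary_le_Bset {n : ℕ} : boundary (snGraph n) (Aset n) ≤ (Bset n).card := by
  classical
  have hfilter : Bset n = (Aset n).filter (fun x => x * Equiv.swap 0 1 ∉ Aset n) := by
    ext x
    simp only [Bset, Finset.mem_filter, mem_Aset_mul_swap_iff]
  rw [hfilter, Finset.card_filter]
  unfold boundary
  apply Finset.sum_le_sum
  intro x hx
  simp only [Aset, Finset.mem_filter, Finset.mem_univ, true_and] at hx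
  have hxA : x ∈ Aset n := by
    simp only [Aset, Finset.mem_filter, Finset.mem_univ, true_and]
    exact hx
  by_cases hsw : x * Equiv.swap 0 1 ∈ Aset n
  · rw [if_neg (by simpa using hsw)]
    rw [Nat.le_zero, Finset.card_eq_zero, Finset.eq_empty_iff_forall_notMem]
    intro y hy
    simp only [Finset.mem_filter, Finset.mem_univ, true_and] at hy
    exact hy.2 ((eq_mul_swap_of_adj hy.1 hxA hy.2) ▸ hsw)
  · rw [if_pos hsw]
    rw [Finset.card_le_one]
    intro a ha b hb
    simp only [Finset.mem_filter, Finset.mem_univ, true_and] at ha hb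
    rw [eq_mul_swap_of_adj ha.1 hxA ha.2, eq_mul_swap_of_adj hb.1 hxA hb.2]

end CheegerSnAux

open CheegerSnAux in
/-- there is `c₁ > 0` such that for all sufficiently large `n`, the Cayley
graph of `Sₙ` with generators `{(12), (12⋯n)^{±1}}` has Cheeger constant `h ≤ c₁ n⁻²`
(here `n = m + 2`). -/
theorem cheeger_upper_sn :
    ∃ c₁ : ℝ, 0 < c₁ ∧ ∃ N : ℕ, ∀ m : ℕ, N ≤ m →
      cheeger (snGraph m) ≤ c₁ / ((m : ℝ) + 2) ^ 2 := by
  refine ⟨16, by norm_num, 8, ?_⟩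
  intro m hm
  have hT1 : 1 ≤ T m := by unfold T; omega
  have hTbig : T m ≤ m := by unfold T; omega
  have h2T : 2 * T m ≤ m + 1 := by unfold T; omega
  have h4T : m + 2 ≤ 4 * T m := by unfold T; omega
  have hs0 : 1 ≤ s0 m := by
    rw [show (1:ℕ) = Finset.card {(1 : Equiv.Perm (Fin (m+2)))} from rfl]
    apply Finset.card_le_card
    intro z hz
    rw [Finset.mem_singleton] at hz
    subst hz
    simp [fib, Fm]
    exact ⟨rfl, rfl⟩
  have hA : (Aset m).card = (m+2) * T m * s0 m := by rw [card_Aset, card_Pset]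
  have hApos : 0 < (Aset m).card := by
    rw [hA]
    have h1 : 0 < m + 2 := by omega
    exact Nat.mul_pos (Nat.mul_pos h1 hT1) hs0
  have hhalf : 2 * (Aset m).card ≤ Fintype.card (Equiv.Perm (Fin (m+2))) := by
    rw [hA, card_perm_eq]
    have e : (m+2)*(m+2) - (m+2) = (m+2)*(m+1) := by
      have : (m+2)*(m+2) = (m+2)*(m+1)+(m+2) := by ring
      omega
    calc 2 * ((m+2) * T m * s0 m) = ((m+2) * (2 * T m)) * s0 m := by ring
      _ ≤ ((m+2) * (m+1)) * s0 m :=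
          Nat.mul_le_mul_right _ (Nat.mul_le_mul_left _ h2T)
      _ = ((m+2)*(m+2) - (m+2)) * s0 m := by rw [e]
  have hb : boundary (snGraph m) (Aset m) ≤ 3 * s0 m := by
    calc boundary (snGraph m) (Aset m) ≤ (Bset m).card := boundary_le_Bset
      _ = (Qset m).card * s0 m := card_Bset
      _ ≤ 3 * s0 m := Nat.mul_le_mul_right _ (card_Qset hm)
  have hbdd : BddBelow {r : ℝ | ∃ A : Finset (Equiv.Perm (Fin (m+2))),
      0 < A.card ∧ 2 * A.card ≤ Fintype.card (Equiv.Perm (Fin (m+2))) ∧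
      r = (boundary (snGraph m) A : ℝ) / (A.card : ℝ)} := by
    refine ⟨0, ?_⟩
    rintro r ⟨A, h1, h2, rfl⟩
    positivity
  have hmem : ((boundary (snGraph m) (Aset m) : ℝ) / ((Aset m).card : ℝ)) ∈
      {r : ℝ | ∃ A : Finset (Equiv.Perm (Fin (m+2))),
      0 < A.card ∧ 2 * A.card ≤ Fintype.card (Equiv.Perm (Fin (m+2))) ∧
      r = (boundary (snGraph m) A : ℝ) / (A.card : ℝ)} :=
    ⟨Aset m, hApos, hhalf, rfl⟩
  have hle : cheeger (snGraph m) ≤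
      (boundary (snGraph m) (Aset m) : ℝ) / ((Aset m).card : ℝ) := csInf_le hbdd hmem
  refine le_trans hle ?_
  have hAposR : (0:ℝ) < ((Aset m).card : ℝ) := by exact_mod_cast hApos
  rw [div_le_div_iff₀ hAposR (by positivity)]
  have key : (boundary (snGraph m) (Aset m)) * (m+2)^2 ≤ 16 * (Aset m).card := by
    calc (boundary (snGraph m) (Aset m)) * (m+2)^2
        ≤ (3 * s0 m) * ((m+2)*(m+2)) := by
          rw [pow_two]
          exact Nat.mul_le_mul hb le_rfl
      _ ≤ (3 * s0 m) * ((m+2) * (4 * T m)) :=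
          Nat.mul_le_mul_left _ (Nat.mul_le_mul_left _ h4T)
      _ = 12 * ((m+2) * T m * s0 m) := by ring
      _ ≤ 16 * ((m+2) * T m * s0 m) :=
          Nat.mul_le_mul_right _ (by omega)
      _ = 16 * (Aset m).card := by rw [hA]
  have keyR : ((boundary (snGraph m) (Aset m) : ℝ)) * (((m:ℝ)+2))^2
      ≤ 16 * ((Aset m).card : ℝ) := by exact_mod_cast key
  exact keyR
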